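/- r_5(C_4, 2) = 2; that is, every 2-coloring of the edges of the complete 5-partite graph with all five parts of size 2 contains a monochromatic C_4, while there exists a 2-coloring of the edges of the complete graph K_5 with no monochromatic C_4. -/

import Mathlib

/-- The complete multipartite graph with `p` parts, each of size `n`:
vertices are pairs `(part, index)`, adjacent iff they lie in different parts. -/
def completeMultipartite (p n : ℕ) : SimpleGraph (Fin p × Fin n) where
  Adj v w := v.1 ≠ w.1
  symm := ⟨fun _ _ h => h.symm⟩
  loopless := ⟨fun _ h => h rfl⟩

instance (p n : ℕ) : DecidableRel (completeMultipartite p n).Adj :=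
  fun v w => inferInstanceAs (Decidable (v.1 ≠ w.1))

/-- The edge coloring `c` contains a monochromatic cycle `C₄` in the graph `G`. -/
def HasMonoC4 {V : Type*} (G : SimpleGraph V) {k : ℕ} (c : Sym2 V → Fin k) : Prop :=
  ∃ v₁ v₂ v₃ v₄ : V,
    v₁ ≠ v₂ ∧ v₁ ≠ v₃ ∧ v₁ ≠ v₄ ∧ v₂ ≠ v₃ ∧ v₂ ≠ v₄ ∧ v₃ ≠ v₄ ∧
    G.Adj v₁ v₂ ∧ G.Adj v₂ v₃ ∧ G.Adj v₃ v₄ ∧ G.Adj v₄ v₁ ∧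
    c s(v₁, v₂) = c s(v₂, v₃) ∧ c s(v₂, v₃) = c s(v₃, v₄) ∧ c s(v₃, v₄) = c s(v₄, v₁)

/-- The `p`-partite Ramsey number `r_p(C₄, k)`: the least positive `n` such that every
`k`-coloring of the edges of `K_n^p` contains a monochromatic `C₄`. -/
noncomputable def multipartiteRamsey (p k : ℕ) : ℕ :=
  sInf {n : ℕ | 0 < n ∧
    ∀ c : Sym2 (Fin p × Fin n) → Fin k, HasMonoC4 (completeMultipartite p n) c}

/-- The pentagon coloring of `K₅`: edges of the 5-cycle get color 0, the rest color 1. -/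
def pentColor : Sym2 (Fin 5 × Fin 1) → Fin 2 :=
  Sym2.lift ⟨fun i j => if j.1 = i.1 + 1 ∨ i.1 = j.1 + 1 then 0 else 1, by
    intro i j; simp [or_comm]⟩

lemma pent_no : ¬ HasMonoC4 (completeMultipartite 5 1) pentColor := by
  unfold HasMonoC4; decide

/-- In a set `T`, the number of ordered pairs of distinct elements is `|T|² - |T|`. -/
lemma offdiag_count (T : Finset (Fin 5 × Fin 2)) :
    ((T ×ˢ T).filter (fun p => p.1 ≠ p.2)).card + T.card = T.card * T.card := by
  classical
  have h1 := Finset.card_filter_add_card_filter_not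
    (s := T ×ˢ T) (p := fun p => p.1 ≠ p.2)
  have h2 : ((T ×ˢ T).filter (fun p => ¬ p.1 ≠ p.2)).card = T.card := by
    apply Finset.card_nbij' (fun p => p.1) (fun u => (u, u))
    · intro p hp
      simp only [Finset.mem_coe, Finset.mem_filter, Finset.mem_product, not_ne_iff] at hp
      exact hp.1.1
    · intro u hu
      simp only [Finset.mem_coe, Finset.mem_filter, Finset.mem_product, not_ne_iff]
      exact ⟨⟨hu, hu⟩, trivial⟩
    · intro p hp
      simp only [Finset.mem_coe, Finset.mem_filter, Finset.mem_product, not_ne_iff] at hp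
      exact Prod.ext rfl hp.2
    · intro u _; rfl
  rw [Finset.card_product] at h1
  omega

/-- Each vertex of `K₂⁵` is the center of at least 24 ordered monochromatic cherries. -/
lemma cherry_lb (c : Sym2 (Fin 5 × Fin 2) → Fin 2) (v : Fin 5 × Fin 2) :
    24 ≤ (Finset.univ.filter (fun p : (Fin 5 × Fin 2) × (Fin 5 × Fin 2) =>
      p.1 ≠ p.2 ∧ v.1 ≠ p.1.1 ∧ v.1 ≠ p.2.1 ∧ c s(v, p.1) = c s(v, p.2))).card := by
  classical
  have h8 : ∀ w : Fin 5 × Fin 2,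
      (Finset.univ.filter (fun u : Fin 5 × Fin 2 => w.1 ≠ u.1)).card = 8 := by decide
  have h01 : ∀ x : Fin 2, x = 0 ∨ x = 1 := by decide
  set N := Finset.univ.filter (fun u : Fin 5 × Fin 2 => v.1 ≠ u.1) with hN
  set R := N.filter (fun u => c s(v, u) = 0) with hR
  set B := N.filter (fun u => c s(v, u) = 1) with hB
  have hRB : R.card + B.card = 8 := by
    have hsplit := Finset.card_filter_add_card_filter_not
      (s := N) (p := fun u => c s(v, u) = 0)
    rw [← hR] at hsplit
    have hBeq : B = N.filter (fun u => ¬ c s(v, u) = 0) := by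
      rw [hB]
      apply Finset.filter_congr
      intro u _
      rcases h01 (c s(v, u)) with h | h <;> simp [h]
    rw [hBeq]
    rw [hN] at hsplit ⊢
    rw [h8 v] at hsplit
    omega
  have hPeq : (Finset.univ.filter (fun p : (Fin 5 × Fin 2) × (Fin 5 × Fin 2) =>
      p.1 ≠ p.2 ∧ v.1 ≠ p.1.1 ∧ v.1 ≠ p.2.1 ∧ c s(v, p.1) = c s(v, p.2)))
      = ((R ×ˢ R).filter (fun p => p.1 ≠ p.2)) ∪ ((B ×ˢ B).filter (fun p => p.1 ≠ p.2)) := by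
    ext p
    rcases h01 (c s(v, p.1)) with h | h <;> rcases h01 (c s(v, p.2)) with h' | h' <;>
      simp only [Finset.mem_filter, Finset.mem_union, Finset.mem_product, Finset.mem_univ,
        true_and, hR, hB, hN, h, h'] <;>
      constructor <;> intro hyp <;>
      simp_all
  have hdisj : Disjoint ((R ×ˢ R).filter (fun p => p.1 ≠ p.2))
      ((B ×ˢ B).filter (fun p => p.1 ≠ p.2)) := by
    rw [Finset.disjoint_left]
    intro p hp hq
    rw [Finset.mem_filter, Finset.mem_product] at hp hq
    rw [hR, Finset.mem_filter] at hp
    rw [hB, Finset.mem_filter] at hq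
    have h0 := hp.1.1.2
    have h1 := hq.1.1.2
    rw [h0] at h1
    exact absurd h1 (by decide)
  rw [hPeq, Finset.card_union_of_disjoint hdisj]
  have hx := offdiag_count R
  have hy := offdiag_count B
  have hr8 : R.card ≤ 8 := by omega
  have hb8 : B.card ≤ 8 := by omega
  set r := R.card
  set b := B.card
  interval_cases r <;> interval_cases b <;> omega

/-- Every 2-coloring of the edges of `K₂⁵` contains a monochromatic `C₄`. -/
lemma forall_coloring (c : Sym2 (Fin 5 × Fin 2) → Fin 2) :
    HasMonoC4 (completeMultipartite 5 2) c := by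
  classical
  by_contra h
  -- `S` is the set of ordered monochromatic cherries `(v, u, w)`
  set S : Finset ((Fin 5 × Fin 2) × (Fin 5 × Fin 2) × (Fin 5 × Fin 2)) :=
    Finset.univ.filter (fun t => t.2.1 ≠ t.2.2 ∧ t.1.1 ≠ t.2.1.1 ∧ t.1.1 ≠ t.2.2.1 ∧
      c s(t.1, t.2.1) = c s(t.1, t.2.2)) with hSdef
  -- upper bound: with no mono C₄, the map `(v,u,w) ↦ (u,w,color)` is injective on `S`
  have hub : S.card ≤ 200 := by
    have hcard : (Finset.univ : Finset ((Fin 5 × Fin 2) × (Fin 5 × Fin 2) × Fin 2)).card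
        = 200 := by simp [Finset.card_univ]
    rw [← hcard]
    apply Finset.card_le_card_of_injOn (fun t => (t.2.1, t.2.2, c s(t.1, t.2.1)))
    · intro _ _; exact Finset.mem_univ _
    · rintro ⟨v, u, w⟩ ht ⟨v', u', w'⟩ ht' heq
      simp only [hSdef, Finset.coe_filter, Set.mem_setOf_eq, Finset.mem_univ,
        true_and] at ht ht'
      obtain ⟨h1, h2, h3, h4⟩ := ht
      obtain ⟨h1', h2', h3', h4'⟩ := ht'
      obtain ⟨e1, e2, e3⟩ : u = u' ∧ w = w' ∧ c s(v, u) = c s(v', u') := by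
        simpa [Prod.ext_iff] using heq
      subst e1; subst e2
      by_cases hv : v = v'
      · rw [hv]
      · exfalso
        apply h
        have sw1 : (s(u, v') : Sym2 (Fin 5 × Fin 2)) = s(v', u) := Sym2.eq_swap
        have sw2 : (s(w, v) : Sym2 (Fin 5 × Fin 2)) = s(v, w) := Sym2.eq_swap
        refine ⟨v, u, v', w,
          fun he => h2 (congrArg Prod.fst he), hv,
          fun he => h3 (congrArg Prod.fst he),
          fun he => h2' (congrArg Prod.fst he).symm, h1,
          fun he => h3' (congrArg Prod.fst he),
          h2, fun he => h2' he.symm, h3', fun he => h3 he.symm,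
          ?_, ?_, ?_⟩
        · rw [sw1]; exact e3
        · rw [sw1]; exact h4'
        · rw [sw2]; exact (h4'.symm.trans e3.symm).trans h4
  -- lower bound: counting cherries fiberwise over their centers
  have hlb : 240 ≤ S.card := by
    have hfib : S.card = ∑ v : Fin 5 × Fin 2, (S.filter (fun t => t.1 = v)).card :=
      Finset.card_eq_sum_card_fiberwise (fun x _ => Finset.mem_univ x.1)
    have hfibcard : ∀ v : Fin 5 × Fin 2, (S.filter (fun t => t.1 = v)).card =
        (Finset.univ.filter (fun p : (Fin 5 × Fin 2) × (Fin 5 × Fin 2) =>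
          p.1 ≠ p.2 ∧ v.1 ≠ p.1.1 ∧ v.1 ≠ p.2.1 ∧ c s(v, p.1) = c s(v, p.2))).card := by
      intro v
      apply Finset.card_nbij' (fun t => t.2) (fun p => (v, p))
      · intro t ht
        simp only [Finset.mem_coe, hSdef, Finset.filter_filter, Finset.mem_filter, Finset.mem_univ,
          true_and] at ht
        obtain ⟨⟨h1, h2, h3, h4⟩, h5⟩ := ht
        subst h5
        simp only [Finset.mem_coe, Finset.mem_filter, Finset.mem_univ, true_and]
        exact ⟨h1, h2, h3, h4⟩
      · intro p hp
        simp only [Finset.mem_coe, Finset.mem_filter, Finset.mem_univ, true_and] at hp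
        simp only [Finset.mem_coe, hSdef, Finset.filter_filter, Finset.mem_filter, Finset.mem_univ, true_and]
        exact ⟨⟨hp.1, hp.2.1, hp.2.2.1, hp.2.2.2⟩, trivial⟩
      · intro t ht
        simp only [Finset.mem_coe, Finset.mem_filter] at ht
        exact Prod.ext ht.2.symm rfl
      · intro p _; rfl
    rw [hfib]
    calc (240 : ℕ) = ∑ _v : Fin 5 × Fin 2, 24 := by simp
      _ ≤ _ := Finset.sum_le_sum (fun v _ => by rw [hfibcard v]; exact cherry_lb c v)
  omega

/-- `r₅(C₄, 2) = 2`: every 2-coloring of the edges of `K_2^5` contains a monochromatic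
`C₄`, while there is a 2-coloring of the edges of `K_5 = K_1^5` with no monochromatic
`C₄`. -/
theorem multipartiteRamsey_five_two :
    multipartiteRamsey 5 2 = 2 ∧
    (∀ c : Sym2 (Fin 5 × Fin 2) → Fin 2, HasMonoC4 (completeMultipartite 5 2) c) ∧
    (∃ c : Sym2 (Fin 5 × Fin 1) → Fin 2, ¬ HasMonoC4 (completeMultipartite 5 1) c) := by
  refine ⟨?_, forall_coloring, ⟨pentColor, pent_no⟩⟩
  have h2mem : (2 : ℕ) ∈ {n : ℕ | 0 < n ∧
      ∀ c : Sym2 (Fin 5 × Fin n) → Fin 2, HasMonoC4 (completeMultipartite 5 n) c} := by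
    refine ⟨by norm_num, forall_coloring⟩
  apply le_antisymm
  · exact Nat.sInf_le h2mem
  · apply le_csInf ⟨2, h2mem⟩
    intro m hm
    obtain ⟨hpos, hall⟩ := hm
    by_contra hlt
    push_neg at hlt
    interval_cases m
    exact pent_no (hall pentColor)
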